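/- Let p be a prime number and let S be the group algebra 𝔽_p[ℤ/pℤ] (i.e., AddMonoidAlgebra (ZMod p) (ZMod p)), equipped with its canonical ℤ/pℤ-grading in which the basis element χ^d is homogeneous of degree d. Then the nilradical of S is not a homogeneous ideal. Concretely, the element χ^1 − χ^0 is nilpotent (indeed (χ^1 − χ^0)^p = 0), but its homogeneous components χ^1 and χ^0 = 1 are not nilpotent. -/

import Mathlib

/-- Let `p` be prime and `S = 𝔽_p[ℤ/pℤ]` with its canonical `ℤ/pℤ`-grading
(`AddMonoidAlgebra.grade`).  The nilradical of `S` is not a homogeneous ideal; concretely,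
`χ¹ - χ⁰` is nilpotent (indeed `(χ¹ - χ⁰)^p = 0`) but its homogeneous components `χ¹` and
`χ⁰ = 1` are not nilpotent. -/
theorem stmt_0 (p : ℕ) [Fact p.Prime] :
    ¬ (nilradical (AddMonoidAlgebra (ZMod p) (ZMod p))).IsHomogeneous
        (AddMonoidAlgebra.grade (ZMod p) :
          ZMod p → Submodule (ZMod p) (AddMonoidAlgebra (ZMod p) (ZMod p))) ∧
    (AddMonoidAlgebra.single (1 : ZMod p) (1 : ZMod p)
        - AddMonoidAlgebra.single (0 : ZMod p) (1 : ZMod p)) ^ p = 0 ∧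
    ¬ IsNilpotent (AddMonoidAlgebra.single (1 : ZMod p) (1 : ZMod p)) ∧
    ¬ IsNilpotent (AddMonoidAlgebra.single (0 : ZMod p) (1 : ZMod p)) := by
  classical
  have hp := Fact.out (p := p.Prime)
  haveI : CharP (AddMonoidAlgebra (ZMod p) (ZMod p)) p :=
    charP_of_injective_algebraMap (algebraMap (ZMod p) _).injective p
  have hsp : ∀ n : ℕ, (AddMonoidAlgebra.single (1 : ZMod p) (1 : ZMod p)) ^ n
      = AddMonoidAlgebra.single (n • (1 : ZMod p)) 1 := by
    intro n
    rw [AddMonoidAlgebra.single_pow, one_pow]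
  have h2 : (AddMonoidAlgebra.single (1 : ZMod p) (1 : ZMod p)
      - AddMonoidAlgebra.single (0 : ZMod p) (1 : ZMod p)) ^ p = 0 := by
    rw [sub_pow_char, hsp, AddMonoidAlgebra.single_pow, one_pow]
    simp [nsmul_eq_mul]
  have h3 : ¬ IsNilpotent (AddMonoidAlgebra.single (1 : ZMod p) (1 : ZMod p)) := by
    rintro ⟨n, hn⟩
    rw [hsp] at hn
    exact one_ne_zero (AddMonoidAlgebra.single_eq_zero.mp hn)
  have h4 : ¬ IsNilpotent (AddMonoidAlgebra.single (0 : ZMod p) (1 : ZMod p)) := by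
    rintro ⟨n, hn⟩
    rw [AddMonoidAlgebra.single_pow, one_pow, smul_zero] at hn
    exact one_ne_zero (AddMonoidAlgebra.single_eq_zero.mp hn)
  refine ⟨fun h => h3 ?_, h2, h3, h4⟩
  have hmem : (AddMonoidAlgebra.single (1 : ZMod p) (1 : ZMod p)
      - AddMonoidAlgebra.single (0 : ZMod p) (1 : ZMod p)) ∈
      nilradical (AddMonoidAlgebra (ZMod p) (ZMod p)) := ⟨p, h2⟩
  have := h (1 : ZMod p) hmem
  rwa [DirectSum.decompose_sub, AddMonoidAlgebra.grade.decompose_single,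
    AddMonoidAlgebra.grade.decompose_single, DFinsupp.sub_apply,
    DirectSum.of_eq_same, DirectSum.of_eq_of_ne _ _ _ (by exact one_ne_zero),
    sub_zero] at this
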